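/- Let (T, η, t₀, t₁) be a template: T is a finite nonempty type, η is a binary relation on T such that (T, η) is a directed tree, t₀ ∈ T is a leaf of the underlying tree (it has exactly one neighbour), and t₁ ∈ T. Equip T × ℕ with the edge relation relating (u, j) to (v, j) whenever η u v, let ~ be the equivalence relation on T × ℕ generated by the pairs ((t₁, j), (t₀, j+1)) for all j ∈ ℕ, and let S be the quotient (T × ℕ)/~ with the induced edge relation (the class of x is related to the class of y iff some x' ~ x is related to some y' ~ y in T × ℕ). Then S — which is a shallow star when t₀ = t₁ and a periodic path when t₀ ≠ t₁ — is unary FA-presentable. -/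

import Mathlib

/-- The convolution word of the pair `(m, n)`, over the three-letter alphabet `Fin 3`
(`0` plays the role of `s`, `1` of `l`, `2` of `r`). -/
def convWord (m n : ℕ) : List (Fin 3) :=
  List.replicate (min m n) 0 ++ List.replicate (m - min m n) 1 ++
    List.replicate (n - min m n) 2

/-- The convolution language of a binary relation on `ℕ`. -/
def convLang (R : ℕ → ℕ → Prop) : Language (Fin 3) :=
  {w | ∃ m n, R m n ∧ w = convWord m n}

/-- A binary relation on `ℕ` is regular if its convolution language is regular. -/
def RegularRel (R : ℕ → ℕ → Prop) : Prop :=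
  (convLang R).IsRegular
/-- The unary language over a one-letter alphabet associated to a set `L ⊆ ℕ`,
identifying `a^n` with `n`. -/
def unaryLang (L : Set ℕ) : Language Unit :=
  {w | w.length ∈ L}

/-- A (countable) structure `(X, ρ)` with one binary relation is unary FA-presentable
if there are a set `L ⊆ ℕ` whose unary language is regular and a surjection
`φ : L → X` such that equality and the relation, pulled back along `φ`, are
regular relations. -/
def UnaryFAPresentable {X : Type*} (ρ : X → X → Prop) : Prop :=
  ∃ L : Set ℕ, (unaryLang L).IsRegular ∧
    ∃ φ : ℕ → X, (∀ x, ∃ n ∈ L, φ n = x) ∧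
      RegularRel (fun m n => m ∈ L ∧ n ∈ L ∧ φ m = φ n) ∧
      RegularRel (fun m n => m ∈ L ∧ n ∈ L ∧ ρ (φ m) (φ n))
/-- The underlying (simple, undirected) graph of a binary relation `η`. -/
def adjGraph {V : Type*} (η : V → V → Prop) : SimpleGraph V where
  Adj u v := u ≠ v ∧ (η u v ∨ η v u)
  symm := ⟨fun _ _ h => ⟨h.1.symm, h.2.symm⟩⟩
  loopless := ⟨fun _ h => h.1 rfl⟩

/-- `η` is a directed tree if it is irreflexive, no pair is related in both
directions, and the underlying undirected graph is a tree. -/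
def IsDirectedTree {V : Type*} (η : V → V → Prop) : Prop :=
  (∀ v, ¬ η v v) ∧ (∀ u v, ¬ (η u v ∧ η v u)) ∧ (adjGraph η).IsTree

/-- The setoid on `T × ℕ` identifying the copy of `t₁` in the `j`-th copy of the
template with the copy of `t₀` in the `(j+1)`-th copy. -/
def templateSetoid {T : Type*} (t₀ t₁ : T) : Setoid (T × ℕ) :=
  ⟨Relation.EqvGen (fun x y => ∃ j : ℕ, x = (t₁, j) ∧ y = (t₀, j + 1)),
   Relation.EqvGen.is_equivalence _⟩


namespace Stmt8Aux


def gstep : Option (ℕ × ℕ × ℕ) → Fin 3 → Option (ℕ × ℕ × ℕ)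
  | none, _ => none
  | some (a, b, c), x =>
    if x = 0 then (if b = 0 ∧ c = 0 then some (a + 1, b, c) else none)
    else if x = 1 then (if c = 0 then some (a, b + 1, c) else none)
    else some (a, b, c + 1)

def count (w : List (Fin 3)) : Option (ℕ × ℕ × ℕ) := w.foldl gstep (some (0, 0, 0))

lemma gstep_eq_some {a b c : ℕ} {x : Fin 3} {g' : ℕ×ℕ×ℕ}
    (h : gstep (some (a,b,c)) x = some g') :
    (x = 0 ∧ b = 0 ∧ c = 0 ∧ g' = (a+1, b, c)) ∨
    (x = 1 ∧ c = 0 ∧ g' = (a, b+1, c)) ∨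
    (x = 2 ∧ g' = (a, b, c+1)) := by
  fin_cases x <;> simp only [gstep] at h <;> split_ifs at h with h1 <;> simp_all

lemma foldl_rep0 (t a : ℕ) (w : List (Fin 3)) :
    List.foldl gstep (some (a, 0, 0)) (List.replicate t 0 ++ w)
      = List.foldl gstep (some (a + t, 0, 0)) w := by
  induction t generalizing a with
  | zero => simp
  | succ t ih =>
      rw [List.replicate_succ, List.cons_append, List.foldl_cons]
      have h1 : gstep (some (a, 0, 0)) 0 = some (a + 1, 0, 0) := by simp [gstep]
      rw [h1, ih]
      have h2 : a + 1 + t = a + (t + 1) := by omega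
      rw [h2]

lemma foldl_rep1 (t a b : ℕ) (w : List (Fin 3)) :
    List.foldl gstep (some (a, b, 0)) (List.replicate t 1 ++ w)
      = List.foldl gstep (some (a, b + t, 0)) w := by
  induction t generalizing b with
  | zero => simp
  | succ t ih =>
      rw [List.replicate_succ, List.cons_append, List.foldl_cons]
      have h1 : gstep (some (a, b, 0)) 1 = some (a, b + 1, 0) := by simp [gstep]
      rw [h1, ih]
      have h2 : b + 1 + t = b + (t + 1) := by omega
      rw [h2]

lemma foldl_rep2 (t a b c : ℕ) :
    List.foldl gstep (some (a, b, c)) (List.replicate t 2) = some (a, b, c + t) := by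
  induction t generalizing c with
  | zero => simp
  | succ t ih =>
      rw [List.replicate_succ, List.foldl_cons]
      have h1 : gstep (some (a, b, c)) 2 = some (a, b, c + 1) := by simp [gstep]
      rw [h1, ih]
      have h2 : c + 1 + t = c + (t + 1) := by omega
      rw [h2]

lemma count_shape (a b c : ℕ) :
    count (List.replicate a 0 ++ List.replicate b 1 ++ List.replicate c 2)
      = some (a, b, c) := by
  unfold count
  rw [List.append_assoc, foldl_rep0, foldl_rep1, foldl_rep2]
  simp

lemma count_inv : ∀ (w : List (Fin 3)) (a b c : ℕ), count w = some (a, b, c) →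
    w = List.replicate a 0 ++ List.replicate b 1 ++ List.replicate c 2 := by
  intro w
  induction w using List.reverseRecOn with
  | nil =>
      intro a b c h
      unfold count at h
      simp at h
      obtain ⟨rfl, rfl, rfl⟩ := h
      simp
  | append_singleton w x ih =>
      intro a b c h
      unfold count at h
      rw [List.foldl_append, List.foldl_cons, List.foldl_nil] at h
      rcases hw : List.foldl gstep (some (0,0,0)) w with _ | ⟨a', b', c'⟩
      · rw [hw] at h; simp [gstep] at h
      · rw [hw] at h
        have hw' : w = List.replicate a' 0 ++ List.replicate b' 1 ++ List.replicate c' 2 :=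
          ih a' b' c' hw
        subst hw'
        rcases gstep_eq_some h with ⟨rfl, rfl, rfl, hg⟩ | ⟨rfl, rfl, hg⟩ | ⟨rfl, hg⟩ <;>
          obtain ⟨rfl, rfl, rfl⟩ := Prod.mk.injEq .. ▸ hg <;>
          simp [List.replicate_succ', List.append_assoc]

lemma mod_succ_mod (k a : ℕ) : (a % k + 1) % k = (a + 1) % k := by
  conv_rhs => rw [Nat.add_mod]
  rw [Nat.add_mod (a % k) 1, Nat.mod_mod_of_dvd a dvd_rfl]

variable (k B : ℕ)

/-- The encoding of an exact count triple into the finite state. -/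
def hcore (hk : 0 < k) (g : ℕ × ℕ × ℕ) :
    Fin k × Fin k × Fin k × Fin (B + 1) × Fin (B + 1) :=
  (⟨g.1 % k, Nat.mod_lt _ hk⟩, ⟨g.2.1 % k, Nat.mod_lt _ hk⟩, ⟨g.2.2 % k, Nat.mod_lt _ hk⟩,
   ⟨min g.2.1 B, Nat.lt_succ_of_le (min_le_right _ _)⟩,
   ⟨min g.2.2 B, Nat.lt_succ_of_le (min_le_right _ _)⟩)

/-- The DFA recognizing the convolution language determined by `P`. -/
def mDFA (hk : 0 < k) (P : ℕ → ℕ → ℕ → ℕ → ℕ → Prop) :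
    DFA (Fin 3) (Option (Fin k × Fin k × Fin k × Fin (B + 1) × Fin (B + 1))) where
  step s x :=
    match s with
    | none => none
    | some (ra, rb, rc, db, dc) =>
      if x = 0 then
        (if db.val = 0 ∧ dc.val = 0 then
          some (⟨(ra.val + 1) % k, Nat.mod_lt _ hk⟩, rb, rc, db, dc) else none)
      else if x = 1 then
        (if dc.val = 0 then
          some (ra, ⟨(rb.val + 1) % k, Nat.mod_lt _ hk⟩, rc,
            ⟨min (db.val + 1) B, Nat.lt_succ_of_le (min_le_right _ _)⟩, dc) else none)
      else
        some (ra, rb, ⟨(rc.val + 1) % k, Nat.mod_lt _ hk⟩, db,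
          ⟨min (dc.val + 1) B, Nat.lt_succ_of_le (min_le_right _ _)⟩)
  start := some (hcore k B hk (0, 0, 0))
  accept := {s | ∃ g : ℕ × ℕ × ℕ, s = some (hcore k B hk g) ∧
    (min g.2.1 B = 0 ∨ min g.2.2 B = 0) ∧
    P (g.1 % k) (g.2.1 % k) (g.2.2 % k) (min g.2.1 B) (min g.2.2 B)}

lemma step_comm (hk : 0 < k) (hB : 0 < B) (P : ℕ → ℕ → ℕ → ℕ → ℕ → Prop)
    (o : Option (ℕ × ℕ × ℕ)) (x : Fin 3) :
    (mDFA k B hk P).step (Option.map (hcore k B hk) o) x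
      = Option.map (hcore k B hk) (gstep o x) := by
  rcases o with _ | ⟨a, b, c⟩
  · simp [mDFA, gstep]
  · fin_cases x <;>
      simp only [Option.map_some, mDFA, gstep] <;>
      split_ifs with h1 h2 h3 <;>
      first
        | rfl
        | (exfalso; simp only [hcore] at *; omega)
        | (simp [hcore, Prod.ext_iff, Fin.ext_iff, mod_succ_mod] <;> omega)

lemma eval_count (hk : 0 < k) (hB : 0 < B) (P : ℕ → ℕ → ℕ → ℕ → ℕ → Prop)
    (w : List (Fin 3)) :
    (mDFA k B hk P).eval w = Option.map (hcore k B hk) (count w) := by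
  have key : ∀ (w : List (Fin 3)) (o : Option (ℕ × ℕ × ℕ)),
      (mDFA k B hk P).evalFrom (Option.map (hcore k B hk) o) w
        = Option.map (hcore k B hk) (List.foldl gstep o w) := by
    intro w
    induction w with
    | nil => intro o; simp [DFA.evalFrom]
    | cons x w ih =>
        intro o
        rw [List.foldl_cons, ← ih (gstep o x)]
        show List.foldl (mDFA k B hk P).step _ (x :: w) = _
        rw [List.foldl_cons, step_comm k B hk hB]
        rfl
  exact key w (some (0,0,0))

theorem regular_master (hk : 0 < k) (hB : 0 < B) (P : ℕ → ℕ → ℕ → ℕ → ℕ → Prop) :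
    RegularRel (fun m n =>
      P (min m n % k) ((m - min m n) % k) ((n - min m n) % k)
        (min (m - min m n) B) (min (n - min m n) B)) := by
  refine ⟨Option (Fin k × Fin k × Fin k × Fin (B + 1) × Fin (B + 1)), inferInstance,
    mDFA k B hk P, ?_⟩
  ext w
  rw [DFA.mem_accepts]
  constructor
  · intro h
    have h' := h
    change _ ∈ (mDFA k B hk P).accept at h'
    rw [eval_count k B hk hB] at h'
    obtain ⟨g, hg, hmin, hP⟩ := h'
    rcases hcw : count w with _ | ⟨a, b, c⟩
    · rw [hcw] at hg; simp at hg
    · rw [hcw] at hg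
      simp only [Option.map_some, Option.some.injEq] at hg
      have hg' : a % k = g.1 % k ∧ b % k = g.2.1 % k ∧ c % k = g.2.2 % k ∧
          min b B = min g.2.1 B ∧ min c B = min g.2.2 B := by
        have := hg
        simp only [hcore, Prod.ext_iff, Fin.ext_iff] at this
        exact ⟨this.1, this.2.1, this.2.2.1, this.2.2.2.1, this.2.2.2.2⟩
      obtain ⟨e1, e2, e3, e4, e5⟩ := hg'
      have hbc : b = 0 ∨ c = 0 := by
        rcases hmin with h0 | h0
        · left; omega
        · right; omega
      have h1 : min (a + b) (a + c) = a := by omega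
      refine ⟨a + b, a + c, ?_, ?_⟩
      · show P ((min (a+b) (a+c)) % k) ((a + b - min (a+b) (a+c)) % k)
          ((a + c - min (a+b) (a+c)) % k) (min (a + b - min (a+b) (a+c)) B)
          (min (a + c - min (a+b) (a+c)) B)
        rw [h1]
        simp only [Nat.add_sub_cancel_left]
        rw [e1, e2, e3, e4, e5]
        exact hP
      · have hw := count_inv w a b c hcw
        rw [hw]
        unfold convWord
        rw [h1]
        simp only [Nat.add_sub_cancel_left]
  · rintro ⟨m, n, hR, rfl⟩
    show (mDFA k B hk P).eval _ ∈ _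
    rw [eval_count k B hk hB]
    unfold convWord
    rw [count_shape]
    refine ⟨(min m n, m - min m n, n - min m n), rfl, ?_, hR⟩
    show min (m - min m n) B = 0 ∨ min (n - min m n) B = 0
    omega


lemma div_eq_iff' {k : ℕ} (hk : 0 < k) (x t : ℕ) :
    x / k = t ↔ t * k ≤ x ∧ x < t * k + k := by
  constructor
  · rintro rfl
    have h1 := Nat.div_add_mod x k
    have h2 := Nat.mod_lt x hk
    constructor
    · calc x / k * k = k * (x / k) := Nat.mul_comm _ _
        _ ≤ x := by omega
    · have : x / k * k = k * (x / k) := Nat.mul_comm _ _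
      omega
  · rintro ⟨h1, h2⟩
    have a1 : t ≤ x / k := (Nat.le_div_iff_mul_le hk).mpr h1
    have a2 : x / k < t + 1 := by
      rw [Nat.div_lt_iff_lt_mul hk]
      calc x < t * k + k := h2
        _ = (t + 1) * k := by ring
    omega

lemma div_add_div' {k : ℕ} (hk : 0 < k) (a c : ℕ) :
    (a + c) / k = a / k + (a % k + c) / k := by
  conv_lhs => rw [← Nat.div_add_mod a k, Nat.add_assoc]
  rw [Nat.mul_add_div hk]

lemma lvl_shift {k : ℕ} (hk : 0 < k) (a c t : ℕ) :
    (a + c) / k = a / k + t ↔ (t * k ≤ a % k + c ∧ a % k + c < t * k + k) := by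
  rw [div_add_div' hk, Nat.add_right_inj]
  exact div_eq_iff' hk _ t

lemma lvl_fw {k B m n a b c t : ℕ} (hk : 0 < k) (hB : 0 < B)
    (hab : a + b = m) (hac : a + c = n) (hbc : b = 0 ∨ c = 0)
    (ht : 0 < t) (htB : t * k + k ≤ B) :
    n / k = m / k + t ↔
      (min b B = 0 ∧ t * k ≤ a % k + min c B ∧ a % k + min c B < t * k + k) := by
  constructor
  · intro h
    have hmn : m < n := by
      by_contra hcon
      have hle : n / k ≤ m / k := Nat.div_le_div_right (by omega)
      have hkk : 0 < t * k := Nat.mul_pos ht hk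
      omega
    have hb0 : b = 0 := by omega
    have hm : m = a := by omega
    rw [hm, ← hac, lvl_shift hk] at h
    obtain ⟨h1, h2⟩ := h
    have hcB : c < B := by omega
    rw [Nat.min_eq_left hcB.le]
    exact ⟨by omega, h1, h2⟩
  · rintro ⟨h0, h1, h2⟩
    have hb0 : b = 0 := by omega
    have hcB : c < B := by
      rcases le_or_gt B c with hge | hlt
      · rw [Nat.min_eq_right hge] at h1 h2; omega
      · exact hlt
    rw [Nat.min_eq_left hcB.le] at h1 h2
    have h := (lvl_shift hk a c t).mpr ⟨h1, h2⟩
    rw [hac] at h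
    have hm : a = m := by omega
    rw [hm] at h
    exact h

lemma lvl_eq {k B m n a b c : ℕ} (hk : 0 < k) (hB : 0 < B)
    (hab : a + b = m) (hac : a + c = n) (hbc : b = 0 ∨ c = 0) (hkB : k ≤ B) :
    m / k = n / k ↔
      ((min b B = 0 ∧ a % k + min c B < k) ∨ (min c B = 0 ∧ a % k + min b B < k)) := by
  have hmod : a % k < k := Nat.mod_lt _ hk
  rcases hbc with hb0 | hc0
  · subst hb0
    rw [← hab, ← hac]
    simp only [Nat.add_zero]
    have h0 := lvl_shift hk a c 0
    constructor
    · intro h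
      have h' := h0.mp (by omega)
      obtain ⟨-, h2⟩ := h'
      left
      have hcB : c ≤ B := by omega
      rw [Nat.min_eq_left hcB]
      exact ⟨by simp, by omega⟩
    · rintro (⟨-, h2⟩ | ⟨hc, -⟩)
      · have hcB : c < B := by
          rcases le_or_gt B c with hge | hlt
          · rw [Nat.min_eq_right hge] at h2; omega
          · exact hlt
        rw [Nat.min_eq_left hcB.le] at h2
        have h' := h0.mpr ⟨by omega, by omega⟩
        omega
      · have hc0 : c = 0 := by omega
        subst hc0
        simp
  · subst hc0
    rw [← hab, ← hac]
    simp only [Nat.add_zero]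
    have h0 := lvl_shift hk a b 0
    constructor
    · intro h
      have h' := h0.mp (by omega)
      obtain ⟨-, h2⟩ := h'
      right
      have hbB : b ≤ B := by omega
      rw [Nat.min_eq_left hbB]
      exact ⟨by simp, by omega⟩
    · rintro (⟨hb, -⟩ | ⟨-, h2⟩)
      · have hb0 : b = 0 := by omega
        subst hb0
        simp
      · have hbB : b < B := by
          rcases le_or_gt B b with hge | hlt
          · rw [Nat.min_eq_right hge] at h2; omega
          · exact hlt
        rw [Nat.min_eq_left hbB.le] at h2
        have h' := h0.mpr ⟨by omega, by omega⟩
        omega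

variable {T : Type*}

lemma eqvgen_star (t₀ : T) (x y : T × ℕ) :
    Relation.EqvGen (fun x y : T × ℕ => ∃ j : ℕ, x = (t₀, j) ∧ y = (t₀, j + 1)) x y ↔
      (x = y ∨ (x.1 = t₀ ∧ y.1 = t₀)) := by
  constructor
  · intro h
    induction h with
    | rel x y h => obtain ⟨j, rfl, rfl⟩ := h; exact Or.inr ⟨rfl, rfl⟩
    | refl => exact Or.inl rfl
    | symm _ _ _ ih => rcases ih with rfl | ⟨h1, h2⟩; exacts [Or.inl rfl, Or.inr ⟨h2, h1⟩]
    | trans x y z _ _ ih1 ih2 =>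
        rcases ih1 with rfl | ⟨h1, h2⟩
        · exact ih2
        · rcases ih2 with rfl | ⟨h3, h4⟩
          · exact Or.inr ⟨h1, h2⟩
          · exact Or.inr ⟨h1, h4⟩
  · have key : ∀ i : ℕ, Relation.EqvGen
        (fun x y : T × ℕ => ∃ j : ℕ, x = (t₀, j) ∧ y = (t₀, j + 1)) (t₀, 0) (t₀, i) := by
      intro i
      induction i with
      | zero => exact Relation.EqvGen.refl _
      | succ i ih =>
          exact Relation.EqvGen.trans _ _ _ ih (Relation.EqvGen.rel _ _ ⟨i, rfl, rfl⟩)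
    rintro (rfl | ⟨h1, h2⟩)
    · exact Relation.EqvGen.refl _
    · obtain ⟨x1, x2⟩ := x
      obtain ⟨y1, y2⟩ := y
      cases h1
      cases h2
      exact Relation.EqvGen.trans _ _ _ (Relation.EqvGen.symm _ _ (key x2)) (key y2)

lemma eqvgen_path {t₀ t₁ : T} (hne : t₀ ≠ t₁) (x y : T × ℕ) :
    Relation.EqvGen (fun x y : T × ℕ => ∃ j : ℕ, x = (t₁, j) ∧ y = (t₀, j + 1)) x y ↔
      (x = y ∨ (∃ j : ℕ, x = (t₁, j) ∧ y = (t₀, j + 1)) ∨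
        (∃ j : ℕ, y = (t₁, j) ∧ x = (t₀, j + 1))) := by
  constructor
  · intro h
    induction h with
    | rel x y h => exact Or.inr (Or.inl h)
    | refl => exact Or.inl rfl
    | symm a b _ ih =>
        rcases ih with rfl | h | h
        exacts [Or.inl rfl, Or.inr (Or.inr h), Or.inr (Or.inl h)]
    | trans x y z _ _ ih1 ih2 =>
        rcases ih1 with rfl | ⟨j, rfl, rfl⟩ | ⟨j, hy, rfl⟩
        · exact ih2
        · rcases ih2 with rfl | ⟨j2, hy2, rfl⟩ | ⟨j2, rfl, hy2⟩
          · exact Or.inr (Or.inl ⟨j, rfl, rfl⟩)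
          · exact absurd (congrArg Prod.fst hy2) (by simpa using hne)
          · have hj : j = j2 := by
              have := congrArg Prod.snd hy2
              simpa using this
            subst hj
            exact Or.inl rfl
        · subst hy
          rcases ih2 with rfl | ⟨j2, hy2, rfl⟩ | ⟨j2, rfl, hy2⟩
          · exact Or.inr (Or.inr ⟨j, rfl, rfl⟩)
          · have hj : j = j2 := by
              have := congrArg Prod.snd hy2
              simpa using this
            subst hj
            exact Or.inl rfl
          · exact absurd (congrArg Prod.fst hy2) (by simpa using hne.symm)
  · rintro (rfl | ⟨j, rfl, rfl⟩ | ⟨j, rfl, rfl⟩)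
    · exact Relation.EqvGen.refl _
    · exact Relation.EqvGen.rel _ _ ⟨j, rfl, rfl⟩
    · exact Relation.EqvGen.symm _ _ (Relation.EqvGen.rel _ _ ⟨j, rfl, rfl⟩)



variable {T : Type*}

def uenc (k : ℕ) (hk : 0 < k) (e : Fin k ≃ T) : ℕ → T :=
  fun m => e ⟨m % k, Nat.mod_lt _ hk⟩

def denc (k : ℕ) (hk : 0 < k) (e : Fin k ≃ T) : ℕ → T × ℕ :=
  fun m => (uenc k hk e m, m / k)

lemma uenc_eq_iff (k : ℕ) (hk : 0 < k) (e : Fin k ≃ T) (t : T) (m : ℕ) :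
    uenc k hk e m = t ↔ m % k = (e.symm t).val := by
  unfold uenc
  rw [Equiv.apply_eq_iff_eq_symm_apply, Fin.ext_iff]

lemma denc_eq_iff (k : ℕ) (hk : 0 < k) (e : Fin k ≃ T) (t : T) (j m : ℕ) :
    denc k hk e m = (t, j) ↔ (m % k = (e.symm t).val ∧ m / k = j) := by
  unfold denc
  rw [Prod.ext_iff]
  simp only [uenc_eq_iff]

lemma denc_inj (k : ℕ) (hk : 0 < k) (e : Fin k ≃ T) (m n : ℕ) :
    denc k hk e m = denc k hk e n ↔ m = n := by
  constructor
  · intro h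
    have h1 : m % k = n % k := by
      have h1' : uenc k hk e m = uenc k hk e n := congrArg Prod.fst h
      have := e.injective h1'
      exact congrArg Fin.val this
    have h2 : m / k = n / k := congrArg Prod.snd h
    have d1 := Nat.div_add_mod m k
    have d2 := Nat.div_add_mod n k
    rw [h1, h2] at d1
    omega
  · rintro rfl; rfl

lemma uenc_add_mod (k : ℕ) (hk : 0 < k) (e : Fin k ≃ T) (x y : ℕ) :
    uenc k hk e (x % k + y % k) = uenc k hk e (x + y) := by
  unfold uenc
  congr 1
  apply Fin.ext
  show (x % k + y % k) % k = (x + y) % k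
  exact (Nat.add_mod x y k).symm


lemma RegularRel_congr {R R' : ℕ → ℕ → Prop} (h : ∀ m n, R m n ↔ R' m n)
    (hR : RegularRel R') : RegularRel R := by
  have : R = R' := funext fun m => funext fun n => propext (h m n)
  rwa [this]

lemma unary_univ_regular : (unaryLang Set.univ).IsRegular := by
  refine ⟨Unit, inferInstance, ⟨fun _ _ => (), (), Set.univ⟩, ?_⟩
  ext w
  simp only [DFA.mem_accepts]
  constructor <;> intro _ <;> trivial

theorem main_aux {T : Type*} (k : ℕ) (hk : 0 < k) (e : Fin k ≃ T)
    (η : T → T → Prop) (hirr : ∀ v, ¬ η v v) (t₀ t₁ : T) :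
    UnaryFAPresentable (fun a b : Quotient (templateSetoid t₀ t₁) =>
      ∃ x y : T × ℕ, Quotient.mk (templateSetoid t₀ t₁) x = a ∧
        Quotient.mk (templateSetoid t₀ t₁) y = b ∧ x.2 = y.2 ∧ η x.1 y.1) := by
  classical
  have hB : 0 < 3 * k := by omega
  have hkB : k ≤ 3 * k := by omega
  have ht1B : 1 * k + k ≤ 3 * k := by omega
  have ht2B : 2 * k + k ≤ 3 * k := by omega
  have hQ : ∀ x y : T × ℕ,
      (Quotient.mk (templateSetoid t₀ t₁) x = Quotient.mk (templateSetoid t₀ t₁) y) ↔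
        Relation.EqvGen (fun x y : T × ℕ => ∃ j : ℕ, x = (t₁, j) ∧ y = (t₀, j + 1)) x y :=
    fun x y => ⟨Quotient.exact, fun h => @Quotient.sound _ (templateSetoid t₀ t₁) x y h⟩
  refine ⟨Set.univ, unary_univ_regular,
    fun m => Quotient.mk (templateSetoid t₀ t₁) (denc k hk e m), ?_, ?_, ?_⟩
  · -- surjectivity
    intro x
    obtain ⟨⟨t, j⟩, rfl⟩ := Quotient.exists_rep x
    refine ⟨j * k + (e.symm t).val, Set.mem_univ _, ?_⟩
    have hd : denc k hk e (j * k + (e.symm t).val) = (t, j) := by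
      rw [denc_eq_iff]
      constructor
      · rw [Nat.mul_comm j k, Nat.mul_add_mod]
        exact Nat.mod_eq_of_lt (e.symm t).isLt
      · rw [Nat.mul_comm j k, Nat.mul_add_div hk, Nat.div_eq_of_lt (e.symm t).isLt,
          Nat.add_zero]
    exact congrArg _ hd
  · -- equality relation is regular
    by_cases hT : t₀ = t₁
    · subst hT
      refine RegularRel_congr ?_ (regular_master k (3 * k) hk hB
        (fun ra rb rc db dc => (db = 0 ∧ dc = 0) ∨
          ((ra + rb) % k = (e.symm t₀).val ∧ (ra + rc) % k = (e.symm t₀).val)))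
      intro m n
      beta_reduce
      simp only [Set.mem_univ, true_and]
      rw [hQ, eqvgen_star t₀, denc_inj]
      have hdm1 : ∀ m : ℕ, ((denc k hk e m).1 = t₀) ↔ m % k = (e.symm t₀).val :=
        fun m => uenc_eq_iff k hk e t₀ m
      rw [hdm1 m, hdm1 n]
      have hm' : (min m n % k + (m - min m n) % k) % k = m % k := by
        rw [← Nat.add_mod]; congr 1; omega
      have hn' : (min m n % k + (n - min m n) % k) % k = n % k := by
        rw [← Nat.add_mod]; congr 1; omega
      rw [hm', hn']
      constructor
      · rintro (rfl | h)
        exacts [Or.inl (by omega), Or.inr h]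
      · rintro (h | h)
        exacts [Or.inl (by omega), Or.inr h]
    · refine RegularRel_congr ?_ (regular_master k (3 * k) hk hB
        (fun ra rb rc db dc => (db = 0 ∧ dc = 0) ∨
          ((ra + rb) % k = (e.symm t₁).val ∧ (ra + rc) % k = (e.symm t₀).val ∧
            (db = 0 ∧ 1 * k ≤ ra + dc ∧ ra + dc < 1 * k + k)) ∨
          ((ra + rc) % k = (e.symm t₁).val ∧ (ra + rb) % k = (e.symm t₀).val ∧
            (dc = 0 ∧ 1 * k ≤ ra + db ∧ ra + db < 1 * k + k))))
      intro m n
      beta_reduce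
      simp only [Set.mem_univ, true_and]
      rw [hQ, eqvgen_path hT, denc_inj]
      have hab : min m n + (m - min m n) = m := by omega
      have hac : min m n + (n - min m n) = n := by omega
      have hbc : (m - min m n) = 0 ∨ (n - min m n) = 0 := by omega
      have E2 : (∃ j : ℕ, denc k hk e m = (t₁, j) ∧ denc k hk e n = (t₀, j + 1)) ↔
          (m % k = (e.symm t₁).val ∧ n % k = (e.symm t₀).val ∧ n / k = m / k + 1) := by
        constructor
        · rintro ⟨j, h1, h2⟩
          rw [denc_eq_iff] at h1 h2
          exact ⟨h1.1, h2.1, by omega⟩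
        · rintro ⟨h1, h2, h3⟩
          exact ⟨m / k, (denc_eq_iff k hk e t₁ (m / k) m).mpr ⟨h1, rfl⟩,
            (denc_eq_iff k hk e t₀ (m / k + 1) n).mpr ⟨h2, h3⟩⟩
      have E3 : (∃ j : ℕ, denc k hk e n = (t₁, j) ∧ denc k hk e m = (t₀, j + 1)) ↔
          (n % k = (e.symm t₁).val ∧ m % k = (e.symm t₀).val ∧ m / k = n / k + 1) := by
        constructor
        · rintro ⟨j, h1, h2⟩
          rw [denc_eq_iff] at h1 h2
          exact ⟨h1.1, h2.1, by omega⟩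
        · rintro ⟨h1, h2, h3⟩
          exact ⟨n / k, (denc_eq_iff k hk e t₁ (n / k) n).mpr ⟨h1, rfl⟩,
            (denc_eq_iff k hk e t₀ (n / k + 1) m).mpr ⟨h2, h3⟩⟩
      rw [E2, E3]
      rw [lvl_fw hk hB hab hac hbc one_pos ht1B]
      rw [lvl_fw hk hB hac hab (Or.symm hbc) one_pos ht1B]
      have hm' : m % k = (min m n % k + (m - min m n) % k) % k := by
        rw [← Nat.add_mod]; congr 1; omega
      have hn' : n % k = (min m n % k + (n - min m n) % k) % k := by
        rw [← Nat.add_mod]; congr 1; omega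
      rw [hm', hn']
      constructor
      · rintro (rfl | h | h)
        exacts [Or.inl (by omega), Or.inr (Or.inl h), Or.inr (Or.inr h)]
      · rintro (h | h | h)
        exacts [Or.inl (by omega), Or.inr (Or.inl h), Or.inr (Or.inr h)]
  · -- edge relation is regular
    by_cases hT : t₀ = t₁
    · subst hT
      refine RegularRel_congr ?_ (regular_master k (3 * k) hk hB
        (fun ra rb rc db dc =>
          (((db = 0 ∧ ra + dc < k) ∨ (dc = 0 ∧ ra + db < k)) ∧
            η (uenc k hk e (ra + rb)) (uenc k hk e (ra + rc))) ∨
          ((ra + rb) % k = (e.symm t₀).val ∧ η t₀ (uenc k hk e (ra + rc))) ∨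
          ((ra + rc) % k = (e.symm t₀).val ∧ η (uenc k hk e (ra + rb)) t₀)))
      intro m n
      beta_reduce
      simp only [Set.mem_univ, true_and]
      have char : (∃ x y : T × ℕ,
            Quotient.mk (templateSetoid t₀ t₀) x =
              Quotient.mk (templateSetoid t₀ t₀) (denc k hk e m) ∧
            Quotient.mk (templateSetoid t₀ t₀) y =
              Quotient.mk (templateSetoid t₀ t₀) (denc k hk e n) ∧
            x.2 = y.2 ∧ η x.1 y.1) ↔
          ((m / k = n / k ∧ η (uenc k hk e m) (uenc k hk e n)) ∨
           (m % k = (e.symm t₀).val ∧ η t₀ (uenc k hk e n)) ∨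
           (n % k = (e.symm t₀).val ∧ η (uenc k hk e m) t₀)) := by
        constructor
        · rintro ⟨x, y, hx, hy, hlev, hxy⟩
          rw [hQ, eqvgen_star t₀] at hx hy
          rcases hx with rfl | ⟨hx1, hx2⟩
          · rcases hy with rfl | ⟨hy1, hy2⟩
            · exact Or.inl ⟨hlev, hxy⟩
            · refine Or.inr (Or.inr ⟨(uenc_eq_iff k hk e t₀ n).mp hy2, ?_⟩)
              rw [← hy1]
              exact hxy
          · rcases hy with rfl | ⟨hy1, hy2⟩
            · refine Or.inr (Or.inl ⟨(uenc_eq_iff k hk e t₀ m).mp hx2, ?_⟩)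
              rw [← hx1]
              exact hxy
            · rw [hx1, hy1] at hxy
              exact absurd hxy (hirr t₀)
        · rintro (⟨h1, h2⟩ | ⟨h1, h2⟩ | ⟨h1, h2⟩)
          · exact ⟨denc k hk e m, denc k hk e n, rfl, rfl, h1, h2⟩
          · refine ⟨(t₀, n / k), denc k hk e n, ?_, rfl, rfl, h2⟩
            rw [hQ, eqvgen_star t₀]
            exact Or.inr ⟨rfl, (uenc_eq_iff k hk e t₀ m).mpr h1⟩
          · refine ⟨denc k hk e m, (t₀, m / k), rfl, ?_, rfl, h2⟩
            rw [hQ, eqvgen_star t₀]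
            exact Or.inr ⟨rfl, (uenc_eq_iff k hk e t₀ n).mpr h1⟩
      rw [char]
      have hab : min m n + (m - min m n) = m := by omega
      have hac : min m n + (n - min m n) = n := by omega
      have hbc : (m - min m n) = 0 ∨ (n - min m n) = 0 := by omega
      rw [lvl_eq hk hB hab hac hbc hkB]
      have hum : uenc k hk e m = uenc k hk e (min m n % k + (m - min m n) % k) := by
        rw [uenc_add_mod, hab]
      have hun : uenc k hk e n = uenc k hk e (min m n % k + (n - min m n) % k) := by
        rw [uenc_add_mod, hac]
      have hm' : m % k = (min m n % k + (m - min m n) % k) % k := by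
        rw [← Nat.add_mod]; congr 1; omega
      have hn' : n % k = (min m n % k + (n - min m n) % k) % k := by
        rw [← Nat.add_mod]; congr 1; omega
      rw [hum, hun, hm', hn']
    · refine RegularRel_congr ?_ (regular_master k (3 * k) hk hB
        (fun ra rb rc db dc =>
          (((db = 0 ∧ ra + dc < k) ∨ (dc = 0 ∧ ra + db < k)) ∧
            η (uenc k hk e (ra + rb)) (uenc k hk e (ra + rc))) ∨
          ((ra + rc) % k = (e.symm t₁).val ∧
            (dc = 0 ∧ 1 * k ≤ ra + db ∧ ra + db < 1 * k + k) ∧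
            η (uenc k hk e (ra + rb)) t₀) ∨
          ((ra + rc) % k = (e.symm t₀).val ∧
            (db = 0 ∧ 1 * k ≤ ra + dc ∧ ra + dc < 1 * k + k) ∧
            η (uenc k hk e (ra + rb)) t₁) ∨
          ((ra + rb) % k = (e.symm t₁).val ∧
            (db = 0 ∧ 1 * k ≤ ra + dc ∧ ra + dc < 1 * k + k) ∧
            η t₀ (uenc k hk e (ra + rc))) ∨
          ((ra + rb) % k = (e.symm t₁).val ∧ (ra + rc) % k = (e.symm t₀).val ∧
            (db = 0 ∧ 2 * k ≤ ra + dc ∧ ra + dc < 2 * k + k) ∧ η t₀ t₁) ∨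
          ((ra + rb) % k = (e.symm t₀).val ∧
            (dc = 0 ∧ 1 * k ≤ ra + db ∧ ra + db < 1 * k + k) ∧
            η t₁ (uenc k hk e (ra + rc))) ∨
          ((ra + rb) % k = (e.symm t₀).val ∧ (ra + rc) % k = (e.symm t₁).val ∧
            (dc = 0 ∧ 2 * k ≤ ra + db ∧ ra + db < 2 * k + k) ∧ η t₁ t₀)))
      intro m n
      beta_reduce
      simp only [Set.mem_univ, true_and]
      have char : (∃ x y : T × ℕ,
            Quotient.mk (templateSetoid t₀ t₁) x =
              Quotient.mk (templateSetoid t₀ t₁) (denc k hk e m) ∧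
            Quotient.mk (templateSetoid t₀ t₁) y =
              Quotient.mk (templateSetoid t₀ t₁) (denc k hk e n) ∧
            x.2 = y.2 ∧ η x.1 y.1) ↔
          ((m / k = n / k ∧ η (uenc k hk e m) (uenc k hk e n)) ∨
           (n % k = (e.symm t₁).val ∧ m / k = n / k + 1 ∧ η (uenc k hk e m) t₀) ∨
           (n % k = (e.symm t₀).val ∧ n / k = m / k + 1 ∧ η (uenc k hk e m) t₁) ∨
           (m % k = (e.symm t₁).val ∧ n / k = m / k + 1 ∧ η t₀ (uenc k hk e n)) ∨
           (m % k = (e.symm t₁).val ∧ n % k = (e.symm t₀).val ∧ n / k = m / k + 2 ∧ η t₀ t₁) ∨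
           (m % k = (e.symm t₀).val ∧ m / k = n / k + 1 ∧ η t₁ (uenc k hk e n)) ∨
           (m % k = (e.symm t₀).val ∧ n % k = (e.symm t₁).val ∧ m / k = n / k + 2 ∧ η t₁ t₀)) := by
        constructor
        · rintro ⟨x, y, hx, hy, hlev, hxy⟩
          rw [hQ, eqvgen_path hT] at hx hy
          rcases hx with rfl | ⟨j, rfl, hdm⟩ | ⟨j, hdm, rfl⟩
          · rcases hy with rfl | ⟨j2, rfl, hdn⟩ | ⟨j2, hdn, rfl⟩
            · exact Or.inl ⟨hlev, hxy⟩
            · obtain ⟨hdn1, hdn2⟩ := (denc_eq_iff k hk e t₀ (j2 + 1) n).mp hdn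
              exact Or.inr (Or.inr (Or.inl ⟨hdn1, by
                have : (denc k hk e m).2 = m / k := rfl
                omega, hxy⟩))
            · obtain ⟨hdn1, hdn2⟩ := (denc_eq_iff k hk e t₁ j2 n).mp hdn
              exact Or.inr (Or.inl ⟨hdn1, by
                have : (denc k hk e m).2 = m / k := rfl
                omega, hxy⟩)
          · obtain ⟨hdm1, hdm2⟩ := (denc_eq_iff k hk e t₀ (j + 1) m).mp hdm
            rcases hy with rfl | ⟨j2, rfl, hdn⟩ | ⟨j2, hdn, rfl⟩
            · exact Or.inr (Or.inr (Or.inr (Or.inr (Or.inr (Or.inl ⟨hdm1, by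
                have : (denc k hk e n).2 = n / k := rfl
                omega, hxy⟩)))))
            · exact absurd hxy (hirr t₁)
            · obtain ⟨hdn1, hdn2⟩ := (denc_eq_iff k hk e t₁ j2 n).mp hdn
              exact Or.inr (Or.inr (Or.inr (Or.inr (Or.inr (Or.inr
                ⟨hdm1, hdn1, by omega, hxy⟩)))))
          · obtain ⟨hdm1, hdm2⟩ := (denc_eq_iff k hk e t₁ j m).mp hdm
            rcases hy with rfl | ⟨j2, rfl, hdn⟩ | ⟨j2, hdn, rfl⟩
            · exact Or.inr (Or.inr (Or.inr (Or.inl ⟨hdm1, by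
                have : (denc k hk e n).2 = n / k := rfl
                omega, hxy⟩)))
            · obtain ⟨hdn1, hdn2⟩ := (denc_eq_iff k hk e t₀ (j2 + 1) n).mp hdn
              exact Or.inr (Or.inr (Or.inr (Or.inr (Or.inl
                ⟨hdm1, hdn1, by omega, hxy⟩))))
            · exact absurd hxy (hirr t₀)
        · rintro (⟨h1, h2⟩ | ⟨h1, h2, h3⟩ | ⟨h1, h2, h3⟩ | ⟨h1, h2, h3⟩ |
            ⟨h1, h2, h3, h4⟩ | ⟨h1, h2, h3⟩ | ⟨h1, h2, h3, h4⟩)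
          · exact ⟨denc k hk e m, denc k hk e n, rfl, rfl, h1, h2⟩
          · -- C01 : x = denc m, y = (t₀, n/k + 1)
            refine ⟨denc k hk e m, (t₀, n / k + 1), rfl, ?_, by
              show m / k = n / k + 1
              exact h2, h3⟩
            rw [hQ, eqvgen_path hT]
            exact Or.inr (Or.inr ⟨n / k, (denc_eq_iff k hk e t₁ (n / k) n).mpr ⟨h1, rfl⟩, rfl⟩)
          · -- C02 : x = denc m, y = (t₁, m/k)
            refine ⟨denc k hk e m, (t₁, m / k), rfl, ?_, rfl, h3⟩
            rw [hQ, eqvgen_path hT]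
            exact Or.inr (Or.inl ⟨m / k,  rfl,
              (denc_eq_iff k hk e t₀ (m / k + 1) n).mpr ⟨h1, by omega⟩⟩)
          · -- C10 : x = (t₀, m/k + 1), y = denc n
            refine ⟨(t₀, m / k + 1), denc k hk e n, ?_, rfl, by
              show m / k + 1 = n / k
              omega, h3⟩
            rw [hQ, eqvgen_path hT]
            exact Or.inr (Or.inr ⟨m / k, (denc_eq_iff k hk e t₁ (m / k) m).mpr ⟨h1, rfl⟩, rfl⟩)
          · -- C12 : x = (t₀, m/k + 1), y = (t₁, m/k + 1)
            refine ⟨(t₀, m / k + 1), (t₁, m / k + 1), ?_, ?_, rfl, h4⟩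
            · rw [hQ, eqvgen_path hT]
              exact Or.inr (Or.inr ⟨m / k, (denc_eq_iff k hk e t₁ (m / k) m).mpr ⟨h1, rfl⟩, rfl⟩)
            · rw [hQ, eqvgen_path hT]
              exact Or.inr (Or.inl ⟨m / k + 1, rfl,
                (denc_eq_iff k hk e t₀ (m / k + 2) n).mpr ⟨h2, by omega⟩⟩)
          · -- C20 : x = (t₁, n/k), y = denc n
            refine ⟨(t₁, n / k), denc k hk e n, ?_, rfl, rfl, h3⟩
            rw [hQ, eqvgen_path hT]
            exact Or.inr (Or.inl ⟨n / k, rfl,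
              (denc_eq_iff k hk e t₀ (n / k + 1) m).mpr ⟨h1, by omega⟩⟩)
          · -- C21 : x = (t₁, n/k + 1), y = (t₀, n/k + 1)
            refine ⟨(t₁, n / k + 1), (t₀, n / k + 1), ?_, ?_, rfl, h4⟩
            · rw [hQ, eqvgen_path hT]
              exact Or.inr (Or.inl ⟨n / k + 1, rfl,
                (denc_eq_iff k hk e t₀ (n / k + 2) m).mpr ⟨h1, by omega⟩⟩)
            · rw [hQ, eqvgen_path hT]
              exact Or.inr (Or.inr ⟨n / k, (denc_eq_iff k hk e t₁ (n / k) n).mpr ⟨h2, rfl⟩, rfl⟩)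
      rw [char]
      have hab : min m n + (m - min m n) = m := by omega
      have hac : min m n + (n - min m n) = n := by omega
      have hbc : (m - min m n) = 0 ∨ (n - min m n) = 0 := by omega
      rw [lvl_eq hk hB hab hac hbc hkB]
      rw [lvl_fw hk hB hab hac hbc one_pos ht1B]
      rw [lvl_fw hk hB hac hab (Or.symm hbc) one_pos ht1B]
      rw [lvl_fw hk hB hab hac hbc two_pos ht2B]
      rw [lvl_fw hk hB hac hab (Or.symm hbc) two_pos ht2B]
      have hum : uenc k hk e m = uenc k hk e (min m n % k + (m - min m n) % k) := by
        rw [uenc_add_mod, hab]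
      have hun : uenc k hk e n = uenc k hk e (min m n % k + (n - min m n) % k) := by
        rw [uenc_add_mod, hac]
      have hm' : m % k = (min m n % k + (m - min m n) % k) % k := by
        rw [← Nat.add_mod]; congr 1; omega
      have hn' : n % k = (min m n % k + (n - min m n) % k) % k := by
        rw [← Nat.add_mod]; congr 1; omega
      rw [hum, hun, hm', hn']

end Stmt8Aux

theorem stmt8 {T : Type*} [Fintype T] [Nonempty T]
    (η : T → T → Prop) (hη : IsDirectedTree η)
    (t₀ t₁ : T) (hleaf : ∃! v, (adjGraph η).Adj t₀ v) :
    UnaryFAPresentable (fun a b : Quotient (templateSetoid t₀ t₁) =>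
      ∃ x y : T × ℕ, Quotient.mk (templateSetoid t₀ t₁) x = a ∧
        Quotient.mk (templateSetoid t₀ t₁) y = b ∧
        x.2 = y.2 ∧ η x.1 y.1) := by
  have hk : 0 < Fintype.card T := Fintype.card_pos
  exact Stmt8Aux.main_aux (Fintype.card T) hk (Fintype.equivFin T).symm η hη.1 t₀ t₁
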